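/- Let w be a permutation of {1,…,n}. Then raj(w) = maj(w) if and only if w is a fireworks permutation. -/

import Mathlib

open scoped Classical

noncomputable section

namespace RajRegularity

variable {n : ℕ}

/-- Maximal length of an increasing subsequence of `w(i), …, w(n)` beginning with `w(i)`:
the largest cardinality of a set `s` of positions that contains `i`, consists of positions
`≥ i`, and on which `w` is strictly increasing. -/
def lisFrom (w : Equiv.Perm (Fin n)) (i : Fin n) : ℕ :=
  (Finset.univ.filter fun s : Finset (Fin n) =>
      i ∈ s ∧ (∀ j ∈ s, i ≤ j) ∧ ∀ j ∈ s, ∀ k ∈ s, j < k → w j < w k).sup Finset.card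

/-- `rajCode w i = (n − i + 1) −` (maximal length of an increasing subsequence of
`w(i), …, w(n)` beginning with `w(i)`); here positions are 0-based, so the number of
positions `≥ i` is `n - i`. -/
def rajCode (w : Equiv.Perm (Fin n)) (i : Fin n) : ℕ :=
  (n - (i : ℕ)) - lisFrom w i

/-- The Rajchgot index `raj w = Σᵢ rajCode w i`. -/
def raj (w : Equiv.Perm (Fin n)) : ℕ := ∑ i, rajCode w i

/-- The number of inversions of `w`: pairs of positions `i < j` with `w i > w j`. -/
def invNum (w : Equiv.Perm (Fin n)) : ℕ :=
  (Finset.univ.filter fun p : Fin n × Fin n => p.1 < p.2 ∧ w p.2 < w p.1).card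

/-- The `i`-th entry of the inv code: `ℓ_i(w) = #{ j : i < j, w j < w i }`. -/
def ellCode (w : Equiv.Perm (Fin n)) (i : Fin n) : ℕ :=
  (Finset.univ.filter fun j : Fin n => i < j ∧ w j < w i).card

/-- The set of descent positions of `w` (0-based position `j` with `w j > w (j+1)`). -/
def descents (w : Equiv.Perm (Fin n)) : Finset (Fin n) :=
  Finset.univ.filter fun j : Fin n =>
    if h : (j : ℕ) + 1 < n then w ⟨(j : ℕ) + 1, h⟩ < w j else False

/-- The major index: the sum of the (1-based) descent positions of `w`. -/
def maj (w : Equiv.Perm (Fin n)) : ℕ := ∑ j ∈ descents w, ((j : ℕ) + 1)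

/-- `mCode w i`: the number of descents of `w` at positions `≥ i`. -/
def mCode (w : Equiv.Perm (Fin n)) (i : Fin n) : ℕ :=
  ((descents w).filter fun j => i ≤ j).card

/-- `w` is dominant iff it avoids the pattern 132. -/
def Dominant (w : Equiv.Perm (Fin n)) : Prop :=
  ¬ ∃ i j k : Fin n, i < j ∧ j < k ∧ w i < w k ∧ w k < w j

/-- `w` is fireworks iff there are no positions `i < j` with `w j < w (j+1) < w i`. -/
def Fireworks (w : Equiv.Perm (Fin n)) : Prop :=
  ¬ ∃ (i j : Fin n) (h : (j : ℕ) + 1 < n),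
      i < j ∧ w j < w ⟨(j : ℕ) + 1, h⟩ ∧ w ⟨(j : ℕ) + 1, h⟩ < w i

/-- `w` is inverse fireworks iff `w⁻¹` is fireworks. -/
def InvFireworks (w : Equiv.Perm (Fin n)) : Prop := Fireworks w⁻¹

/-- `w` is a valley permutation: for some `a`, it is strictly decreasing on positions `≤ a`
and strictly increasing on positions `≥ a`. -/
def Valley (w : Equiv.Perm (Fin n)) : Prop :=
  ∃ a : ℕ, (∀ i j : Fin n, i < j → (j : ℕ) ≤ a → w j < w i) ∧
    ∀ i j : Fin n, a ≤ (i : ℕ) → i < j → w i < w j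

/-- `eps w i` is the (1-based) blob index `ε_i(w) = i + r_i(w)`. -/
def eps (w : Equiv.Perm (Fin n)) (i : Fin n) : ℕ := (i : ℕ) + 1 + rajCode w i

/-- The shape of `w`: `α_k(w) = #{ i : ε_i(w) = k }` (here `k : Fin n` stands for the
1-based index `k + 1`). -/
def shape (w : Equiv.Perm (Fin n)) : Fin n → ℕ := fun k =>
  (Finset.univ.filter fun i : Fin n => eps w i = (k : ℕ) + 1).card

/-- Dominance order on shapes: `α ⪰ β` iff every tail sum of `α` is at least the
corresponding tail sum of `β`. -/
def Dominates (α β : Fin n → ℕ) : Prop :=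
  ∀ m : Fin n,
    ∑ k ∈ Finset.univ.filter (fun k : Fin n => m ≤ k), β k ≤
      ∑ k ∈ Finset.univ.filter (fun k : Fin n => m ≤ k), α k

/-- Right weak order: `u ≤_R w` iff `w = u * v` length-additively. -/
def leR (u w : Equiv.Perm (Fin n)) : Prop :=
  ∃ v : Equiv.Perm (Fin n), w = u * v ∧ invNum w = invNum u + invNum v

/-- Left weak order: `u ≤_L w` iff `w = v * u` length-additively. -/
def leL (u w : Equiv.Perm (Fin n)) : Prop :=
  ∃ v : Equiv.Perm (Fin n), w = v * u ∧ invNum w = invNum v + invNum u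

/-- Two-sided weak order: the transitive closure of the union of left and right weak
orders (both are reflexive, so we may use the reflexive-transitive closure). -/
def leLR (u w : Equiv.Perm (Fin n)) : Prop :=
  Relation.ReflTransGen (fun a b : Equiv.Perm (Fin n) => leL a b ∨ leR a b) u w

/-- The maximum of the block of the set partition `π(w)` containing the value `v`;
the block of `v` is `{ v' : ε_{w⁻¹ v'}(w) = ε_{w⁻¹ v}(w) }`. -/
def blockMax (w : Equiv.Perm (Fin n)) (v : Fin n) : ℕ :=
  ((Finset.univ.filter fun v' : Fin n => eps w (w⁻¹ v') = eps w (w⁻¹ v)).max'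
      ⟨v, Finset.mem_filter.mpr ⟨Finset.mem_univ v, rfl⟩⟩).val

/-- The fireworks map `Φ`: the one-line word of `Φ w` lists the blocks of `π(w)` in
increasing order of their maxima, each block written in decreasing order.  Equivalently,
`Φ w` sorts the values by the key (max of block, value reversed), lexicographically. -/
def Phi (w : Equiv.Perm (Fin n)) : Equiv.Perm (Fin n) :=
  Tuple.sort fun v : Fin n => n * blockMax w v + (n - 1 - (v : ℕ))

/-- The inverse fireworks map `Φ_inv w = Φ(w⁻¹)⁻¹`. -/
def PhiInv (w : Equiv.Perm (Fin n)) : Equiv.Perm (Fin n) := (Phi w⁻¹)⁻¹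

/-- Partial sums of a sequence of block sizes. -/
def psum (a : ℕ → ℕ) (m : ℕ) : ℕ := ∑ j ∈ Finset.range m, a j

/-- The index of the block (interval `[psum a m, psum a (m+1))`) containing the value `v`. -/
def blockIdx (n : ℕ) (a : ℕ → ℕ) (v : Fin n) : ℕ :=
  ((Finset.range n).filter fun m => psum a (m + 1) ≤ (v : ℕ)).card

/-- The layered permutation with block sizes `a 0, a 1, …`: it reverses each of the
consecutive intervals `[psum a m, psum a (m+1))` of `{0, …, n-1}`.  Equivalently, its
one-line word sorts the values by (block index, value reversed) lexicographically. -/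
def layered (n : ℕ) (a : ℕ → ℕ) : Equiv.Perm (Fin n) :=
  Tuple.sort fun v : Fin n => n * blockIdx n a v + (n - 1 - (v : ℕ))

/-- The layered permutation `e_α` associated to a shape `α : Fin n → ℕ`. -/
def eOf (α : Fin n → ℕ) : Equiv.Perm (Fin n) :=
  layered n fun m => if h : m < n then α ⟨m, h⟩ else 0
section Aux

variable {n : ℕ}

lemma mem_descents_iff (w : Equiv.Perm (Fin n)) (j : Fin n) :
    j ∈ descents w ↔ ∃ h : (j : ℕ) + 1 < n, w ⟨(j : ℕ) + 1, h⟩ < w j := by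
  unfold descents
  simp only [Finset.mem_filter, Finset.mem_univ, true_and]
  by_cases h : (j : ℕ) + 1 < n
  · simp [h]
  · simp [h]

lemma exists_ascent (w : Equiv.Perm (Fin n)) :
    ∀ (d : ℕ) (a b : Fin n), (b : ℕ) = (a : ℕ) + d → w a < w b →
      ∃ j : Fin n, (a : ℕ) ≤ (j : ℕ) ∧ (j : ℕ) < (b : ℕ) ∧
        ∃ h : (j : ℕ) + 1 < n, w j < w ⟨(j : ℕ) + 1, h⟩ := by
  intro d
  induction d with
  | zero =>
      intro a b hb hw
      exfalso
      have : a = b := Fin.ext (by omega)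
      subst this
      exact lt_irrefl _ hw
  | succ d ih =>
      intro a b hb hw
      have hbn : (a : ℕ) + d < n := by have := b.isLt; omega
      set b' : Fin n := ⟨(a : ℕ) + d, hbn⟩ with hb'
      by_cases hc : w b' < w b
      · refine ⟨b', ?_, ?_, ?_⟩
        · simp [hb']
        · simp [hb']; omega
        · have hlt : (b' : ℕ) + 1 < n := by have := b.isLt; simp [hb']; omega
          refine ⟨hlt, ?_⟩
          have : (⟨(b' : ℕ) + 1, hlt⟩ : Fin n) = b := Fin.ext (by simp [hb']; omega)
          rw [this]; exact hc
      · have hne : b ≠ b' := by intro h; rw [h] at hb; simp [hb'] at hb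
        have hlt : w b < w b' := by
          rcases lt_or_eq_of_le (not_lt.mp hc) with h | h
          · exact h
          · exact absurd (w.injective h.symm).symm hne
        have hw' : w a < w b' := hw.trans hlt
        rcases ih a b' (by simp [hb']) hw' with ⟨j, h1, h2, h3⟩
        exact ⟨j, h1, by simp [hb'] at h2; omega, h3⟩

end Aux
section Aux2

variable {n : ℕ}

/-- Bound on the number of descents in a range. -/
lemma dcard_le (w : Equiv.Perm (Fin n)) (i : Fin n) (b : ℕ) :
    (((descents w).filter fun j => i ≤ j ∧ (j : ℕ) < b).card) ≤ b - (i : ℕ) := by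
  have := Finset.card_le_card_of_injOn (f := fun j : Fin n => (j : ℕ))
    (s := (descents w).filter fun j => i ≤ j ∧ (j : ℕ) < b)
    (t := Finset.Ico (i : ℕ) b)
    (by intro j hj
        simp only [Finset.mem_coe, Finset.mem_filter] at hj
        simp only [Finset.mem_coe, Finset.mem_Ico]
        exact ⟨hj.2.1, hj.2.2⟩)
    (by intro x _ y _ h; exact Fin.ext h)
  simpa [Nat.card_Ico] using this

lemma gen_bound (w : Equiv.Perm (Fin n)) :
    ∀ (N : ℕ) (s : Finset (Fin n)), s.card ≤ N → ∀ (i : Fin n) (b : ℕ),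
      i ∈ s → (∀ j ∈ s, i ≤ j) → (∀ j ∈ s, ∀ k ∈ s, j < k → w j < w k) →
      (∀ k ∈ s, (k : ℕ) ≤ b) →
      s.card + (((descents w).filter fun j => i ≤ j ∧ (j : ℕ) < b).card) ≤ b + 1 - (i : ℕ) := by
  intro N
  induction N with
  | zero =>
      intro s hs i b hi _ _ _
      exact absurd (Finset.card_pos.mpr ⟨i, hi⟩) (by omega)
  | succ N ih =>
      intro s hs i b hi hge hincr hcap
      rcases (s.erase i).eq_empty_or_nonempty with he | hne
      · -- s = {i}
        have hsi : s = {i} := by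
          apply Finset.eq_singleton_iff_unique_mem.mpr
          refine ⟨hi, fun x hx => ?_⟩
          by_contra hx'
          exact absurd (Finset.mem_erase.mpr ⟨hx', hx⟩) (by simp [he])
        have hib : (i : ℕ) ≤ b := hcap i hi
        have := dcard_le w i b
        rw [hsi]
        simp only [Finset.card_singleton]
        omega
      · set i' := (s.erase i).min' hne with hi'def
        have hi's : i' ∈ s.erase i := Finset.min'_mem _ hne
        have hi'mem : i' ∈ s := Finset.mem_of_mem_erase hi's
        have hi'ne : i' ≠ i := Finset.ne_of_mem_erase hi's
        have hii' : i < i' := lt_of_le_of_ne (hge i' hi'mem) (Ne.symm hi'ne)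
        -- the erased set is valid at i'
        have hmin : ∀ j ∈ s.erase i, i' ≤ j := fun j hj => Finset.min'_le _ j hj
        have hcard : s.card = (s.erase i).card + 1 := by
          rw [Finset.card_erase_of_mem hi]
          have : 1 ≤ s.card := Finset.card_pos.mpr ⟨i, hi⟩
          omega
        have hIH := ih (s.erase i) (by omega) i' b hi's hmin
          (fun j hj k hk hjk => hincr j (Finset.mem_of_mem_erase hj) k (Finset.mem_of_mem_erase hk) hjk)
          (fun k hk => hcap k (Finset.mem_of_mem_erase hk))
        -- ascent between i and i'
        have hwii' : w i < w i' := hincr i hi i' hi'mem hii'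
        obtain ⟨j0, hj0a, hj0b, hj0h, hj0asc⟩ :=
          exists_ascent w ((i' : ℕ) - (i : ℕ)) i i' (by omega) hwii'
        -- split the descent count
        have hsplit := Finset.card_filter_add_card_filter_not
          (s := (descents w).filter fun j => i ≤ j ∧ (j : ℕ) < b)
          (p := fun j => i' ≤ j)
        -- first part equals the i' count
        have h1 : ((descents w).filter fun j => i ≤ j ∧ (j : ℕ) < b).filter (fun j => i' ≤ j)
            ⊆ (descents w).filter fun j => i' ≤ j ∧ (j : ℕ) < b := by
          intro j hj
          simp only [Finset.mem_filter] at hj ⊢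
          exact ⟨hj.1.1, hj.2, hj.1.2.2⟩
        -- second part: descents in [i, i'), missing the ascent j0
        have h2 : (((descents w).filter fun j => i ≤ j ∧ (j : ℕ) < b).filter
              (fun j => ¬ i' ≤ j)).card ≤ (i' : ℕ) - (i : ℕ) - 1 := by
          have hsub := Finset.card_le_card_of_injOn (f := fun j : Fin n => (j : ℕ))
            (s := ((descents w).filter fun j => i ≤ j ∧ (j : ℕ) < b).filter (fun j => ¬ i' ≤ j))
            (t := (Finset.Ico (i : ℕ) (i' : ℕ)).erase (j0 : ℕ))
            (by intro j hj
                simp only [Finset.mem_coe, Finset.mem_filter] at hj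
                obtain ⟨⟨hjd, hjge, _⟩, hjlt⟩ := hj
                have hjlt' : (j : ℕ) < (i' : ℕ) := by
                  have := Fin.lt_def.mp (lt_of_not_ge hjlt); exact this
                simp only [Finset.mem_coe, Finset.mem_erase, Finset.mem_Ico]
                refine ⟨?_, hjge, hjlt'⟩
                intro hje
                have : j = j0 := Fin.ext hje
                subst this
                rcases (mem_descents_iff w j).mp hjd with ⟨h, hd⟩
                have : (⟨(j : ℕ) + 1, h⟩ : Fin n) = ⟨(j : ℕ) + 1, hj0h⟩ := rfl
                rw [this] at hd
                exact absurd hj0asc (not_lt.mpr (le_of_lt hd))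
              )
            (by intro x _ y _ h; exact Fin.ext h)
          have hj0mem : (j0 : ℕ) ∈ Finset.Ico (i : ℕ) (i' : ℕ) := by
            simp [Finset.mem_Ico]; exact ⟨hj0a, hj0b⟩
          rw [Finset.card_erase_of_mem hj0mem, Nat.card_Ico] at hsub
          exact hsub
        have hi'b : (i' : ℕ) ≤ b := hcap i' hi'mem
        have hii'n : (i : ℕ) < (i' : ℕ) := Fin.lt_def.mp hii'
        have h1' := Finset.card_le_card h1
        omega

end Aux2
section Aux3

variable {n : ℕ}

lemma mCode_eq (w : Equiv.Perm (Fin n)) (i : Fin n) :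
    mCode w i = (((descents w).filter fun j => i ≤ j ∧ (j : ℕ) < n - 1).card) := by
  unfold mCode
  congr 1
  apply Finset.filter_congr
  intro j hj
  rcases (mem_descents_iff w j).mp hj with ⟨h, _⟩
  simp only [iff_self_and]
  intro _
  omega

lemma mCode_le (w : Equiv.Perm (Fin n)) (i : Fin n) :
    mCode w i ≤ n - 1 - (i : ℕ) := by
  rw [mCode_eq]
  exact dcard_le w i (n - 1)

lemma card_add_mCode_le (w : Equiv.Perm (Fin n)) (i : Fin n) (s : Finset (Fin n))
    (hi : i ∈ s) (hge : ∀ j ∈ s, i ≤ j) (hincr : ∀ j ∈ s, ∀ k ∈ s, j < k → w j < w k) :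
    s.card + mCode w i ≤ n - (i : ℕ) := by
  have hn : 1 ≤ n := by have := i.isLt; omega
  rw [mCode_eq]
  have := gen_bound w s.card s le_rfl i (n - 1) hi hge hincr
    (fun k _ => by have := k.isLt; omega)
  omega

lemma lisFrom_le (w : Equiv.Perm (Fin n)) (i : Fin n) :
    lisFrom w i ≤ (n - (i : ℕ)) - mCode w i := by
  unfold lisFrom
  apply Finset.sup_le
  intro s hs
  simp only [Finset.mem_filter, Finset.mem_univ, true_and] at hs
  have := card_add_mCode_le w i s hs.1 hs.2.1 hs.2.2
  omega

lemma mCode_le_rajCode (w : Equiv.Perm (Fin n)) (i : Fin n) :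
    mCode w i ≤ rajCode w i := by
  unfold rajCode
  have h1 := lisFrom_le w i
  have h2 := mCode_le w i
  have hn : (i : ℕ) < n := i.isLt
  omega

lemma maj_eq_sum_mCode (w : Equiv.Perm (Fin n)) : maj w = ∑ i, mCode w i := by
  unfold maj mCode
  have : ∀ j ∈ descents w, (j : ℕ) + 1 = (Finset.univ.filter fun i : Fin n => i ≤ j).card := by
    intro j _
    have : (Finset.univ.filter fun i : Fin n => i ≤ j) = Finset.Iic j := by
      ext x; simp [Finset.mem_Iic]
    rw [this, Fin.card_Iic]
  rw [Finset.sum_congr rfl this]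
  simp only [Finset.card_filter]
  rw [Finset.sum_comm]

end Aux3
section Aux4

variable {n : ℕ}

/-- predecessor position, as plain `Fin` element -/
def pm {n : ℕ} (k : Fin n) : Fin n := ⟨(k : ℕ) - 1, Nat.lt_of_le_of_lt (Nat.sub_le _ _) k.isLt⟩

/-- the set of "ascent tops" after position `i` -/
def ascTops (w : Equiv.Perm (Fin n)) (i : Fin n) : Finset (Fin n) :=
  Finset.univ.filter fun k : Fin n => (i : ℕ) < (k : ℕ) ∧ w (pm k) < w k

/-- the set of "ascent bottoms" at positions `≥ i` -/
def ascBots (w : Equiv.Perm (Fin n)) (i : Fin n) : Finset (Fin n) :=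
  Finset.univ.filter fun m : Fin n =>
    i ≤ m ∧ if h : (m : ℕ) + 1 < n then w m < w ⟨(m : ℕ) + 1, h⟩ else False

lemma ascTops_card (w : Equiv.Perm (Fin n)) (i : Fin n) :
    (ascTops w i).card = (ascBots w i).card := by
  apply Finset.card_nbij' (fun k => pm k)
    (fun m => if h : (m : ℕ) + 1 < n then (⟨(m : ℕ) + 1, h⟩ : Fin n) else m)
  · intro k hk
    simp only [ascTops, Finset.mem_coe, Finset.mem_filter, Finset.mem_univ, true_and] at hk
    obtain ⟨hik, hasc⟩ := hk
    have hk1 : 1 ≤ (k : ℕ) := by omega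
    have hlt : ((pm k : Fin n) : ℕ) + 1 < n := by
      simp only [pm]
      have := k.isLt; omega
    simp only [ascBots, Finset.mem_coe, Finset.mem_filter, Finset.mem_univ, true_and]
    refine ⟨?_, ?_⟩
    · rw [Fin.le_def]; simp [pm]; omega
    · rw [dif_pos hlt]
      have : (⟨((pm k : Fin n) : ℕ) + 1, hlt⟩ : Fin n) = k := by
        apply Fin.ext; simp [pm]; omega
      rw [this]; exact hasc
  · intro m hm
    simp only [ascBots, Finset.mem_coe, Finset.mem_filter, Finset.mem_univ, true_and] at hm
    obtain ⟨him, hm2⟩ := hm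
    by_cases h : (m : ℕ) + 1 < n
    · beta_reduce; rw [dif_pos h] at hm2 ⊢
      simp only [ascTops, Finset.mem_coe, Finset.mem_filter, Finset.mem_univ, true_and]
      constructor
      · have : (i : ℕ) ≤ (m : ℕ) := him
        show (i : ℕ) < (m : ℕ) + 1
        omega
      · have : pm (⟨(m : ℕ) + 1, h⟩ : Fin n) = m := by apply Fin.ext; simp [pm]
        rw [this]; exact hm2
    · rw [dif_neg h] at hm2; exact absurd hm2 (by simp)
  · intro k hk
    simp only [ascTops, Finset.mem_coe, Finset.mem_filter, Finset.mem_univ, true_and] at hk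
    have hk1 : 1 ≤ (k : ℕ) := by omega
    have hlt : ((pm k : Fin n) : ℕ) + 1 < n := by simp only [pm]; have := k.isLt; omega
    beta_reduce; rw [dif_pos hlt]
    apply Fin.ext; simp [pm]; omega
  · intro m hm
    simp only [ascBots, Finset.mem_coe, Finset.mem_filter, Finset.mem_univ, true_and] at hm
    by_cases h : (m : ℕ) + 1 < n
    · beta_reduce; rw [dif_pos h]; apply Fin.ext; simp [pm]
    · rw [dif_neg h] at hm; exact absurd hm.2 (by simp)

lemma ascBots_card_add_mCode (w : Equiv.Perm (Fin n)) (i : Fin n) :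
    (ascBots w i).card + mCode w i = n - 1 - (i : ℕ) := by
  have hn : 1 ≤ n := by have := i.isLt; omega
  set S : Finset (Fin n) := Finset.univ.filter fun j : Fin n => i ≤ j ∧ (j : ℕ) + 1 < n with hS
  have hsplit := Finset.card_filter_add_card_filter_not
    (s := S) (p := fun j : Fin n => if h : (j : ℕ) + 1 < n then w ⟨(j : ℕ) + 1, h⟩ < w j else False)
  have h1 : S.filter (fun j : Fin n => if h : (j : ℕ) + 1 < n then w ⟨(j : ℕ) + 1, h⟩ < w j else False)
      = (descents w).filter fun j => i ≤ j := by
    ext j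
    simp only [hS, Finset.mem_filter, Finset.mem_univ, true_and, mem_descents_iff]
    constructor
    · rintro ⟨⟨hij, hjn⟩, hd⟩
      rw [dif_pos hjn] at hd
      exact ⟨⟨hjn, hd⟩, hij⟩
    · rintro ⟨⟨hjn, hd⟩, hij⟩
      refine ⟨⟨hij, hjn⟩, ?_⟩
      rw [dif_pos hjn]; exact hd
  have h2 : S.filter (fun j : Fin n =>
      ¬ (if h : (j : ℕ) + 1 < n then w ⟨(j : ℕ) + 1, h⟩ < w j else False)) = ascBots w i := by
    ext j
    simp only [hS, ascBots, Finset.mem_filter, Finset.mem_univ, true_and]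
    constructor
    · rintro ⟨⟨hij, hjn⟩, hd⟩
      rw [dif_pos hjn] at hd
      refine ⟨hij, ?_⟩
      rw [dif_pos hjn]
      rcases lt_trichotomy (w j) (w ⟨(j : ℕ) + 1, hjn⟩) with h | h | h
      · exact h
      · exfalso
        have : j = ⟨(j : ℕ) + 1, hjn⟩ := w.injective h
        have := congrArg Fin.val this
        simp at this
      · exact absurd h hd
    · rintro ⟨hij, hd⟩
      by_cases hjn : (j : ℕ) + 1 < n
      · rw [dif_pos hjn] at hd
        refine ⟨⟨hij, hjn⟩, ?_⟩
        rw [dif_pos hjn]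
        exact not_lt.mpr (le_of_lt hd)
      · rw [dif_neg hjn] at hd
        exact absurd hd (by simp)
  have hScard : S.card = n - 1 - (i : ℕ) := by
    have : S = Finset.Ico i ⟨n - 1, by omega⟩ := by
      ext j
      simp only [hS, Finset.mem_filter, Finset.mem_univ, true_and, Finset.mem_Ico]
      constructor
      · rintro ⟨h1, h2⟩
        exact ⟨h1, by rw [Fin.lt_def]; simp; omega⟩
      · rintro ⟨h1, h2⟩
        rw [Fin.lt_def] at h2
        simp at h2
        exact ⟨h1, by omega⟩
    rw [this, Fin.card_Ico]
  rw [h1, h2] at hsplit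
  unfold mCode
  omega

end Aux4
section Aux5

variable {n : ℕ}

lemma fw_lt {w : Equiv.Perm (Fin n)} (hF : Fireworks w) (i j : Fin n)
    (h : (j : ℕ) + 1 < n) (hij : i < j) (ha : w j < w ⟨(j : ℕ) + 1, h⟩) :
    w i < w ⟨(j : ℕ) + 1, h⟩ := by
  by_contra hcon
  rcases lt_or_eq_of_le (not_lt.mp hcon) with hlt | heq
  · exact hF ⟨i, j, h, hij, ha, hlt⟩
  · have : (⟨(j : ℕ) + 1, h⟩ : Fin n) = i := w.injective heq
    have := congrArg Fin.val this
    simp at this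
    have := Fin.lt_def.mp hij
    omega

lemma incr_on_fwSet {w : Equiv.Perm (Fin n)} (hF : Fireworks w) (i : Fin n) :
    ∀ j ∈ insert i (ascTops w i), ∀ k ∈ insert i (ascTops w i), j < k → w j < w k := by
  intro j hj k hk hjk
  have hkT : k ∈ ascTops w i := by
    rcases Finset.mem_insert.mp hk with hk | hk
    · exfalso
      subst hk
      rcases Finset.mem_insert.mp hj with hj | hj
      · subst hj; exact lt_irrefl _ hjk
      · simp only [ascTops, Finset.mem_filter, Finset.mem_univ, true_and] at hj
        have := Fin.lt_def.mp hjk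
        omega
    · exact hk
  simp only [ascTops, Finset.mem_filter, Finset.mem_univ, true_and] at hkT
  obtain ⟨hik, hasc⟩ := hkT
  have hk1 : 1 ≤ (k : ℕ) := by omega
  have hm1 : ((pm k : Fin n) : ℕ) + 1 < n := by simp only [pm]; have := k.isLt; omega
  have hkeq : (⟨((pm k : Fin n) : ℕ) + 1, hm1⟩ : Fin n) = k := by
    apply Fin.ext; simp [pm]; omega
  have hasc' : w (pm k) < w ⟨((pm k : Fin n) : ℕ) + 1, hm1⟩ := by rw [hkeq]; exact hasc
  have hjm : (j : ℕ) ≤ ((pm k : Fin n) : ℕ) := by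
    simp only [pm]
    have := Fin.lt_def.mp hjk
    omega
  rcases lt_or_eq_of_le hjm with hlt | heq
  · have := fw_lt hF j (pm k) hm1 (Fin.lt_def.mpr hlt) hasc'
    rw [hkeq] at this; exact this
  · have : j = pm k := Fin.ext heq
    rw [this]; exact hasc

lemma rajCode_eq_mCode_of_fireworks {w : Equiv.Perm (Fin n)} (hF : Fireworks w) (i : Fin n) :
    rajCode w i = mCode w i := by
  have hn : (i : ℕ) < n := i.isLt
  set s : Finset (Fin n) := insert i (ascTops w i) with hs
  have hiT : i ∉ ascTops w i := by
    simp [ascTops]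
  have hge : ∀ j ∈ s, i ≤ j := by
    intro j hj
    rcases Finset.mem_insert.mp hj with hj | hj
    · subst hj; exact le_refl _
    · simp only [ascTops, Finset.mem_filter, Finset.mem_univ, true_and] at hj
      exact Fin.le_def.mpr (le_of_lt hj.1)
  have hmem : s ∈ Finset.univ.filter fun s : Finset (Fin n) =>
      i ∈ s ∧ (∀ j ∈ s, i ≤ j) ∧ ∀ j ∈ s, ∀ k ∈ s, j < k → w j < w k := by
    simp only [Finset.mem_filter, Finset.mem_univ, true_and]
    exact ⟨Finset.mem_insert_self _ _, hge, incr_on_fwSet hF i⟩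
  have hcard : s.card = (ascTops w i).card + 1 := by
    rw [hs, Finset.card_insert_of_notMem hiT]
  have hlb : s.card ≤ lisFrom w i := Finset.le_sup hmem
  have hub := lisFrom_le w i
  have hA := ascBots_card_add_mCode w i
  have hTA := ascTops_card w i
  have hM := mCode_le w i
  unfold rajCode
  omega

lemma raj_eq_maj_of_fireworks {w : Equiv.Perm (Fin n)} (hF : Fireworks w) :
    raj w = maj w := by
  rw [raj, maj_eq_sum_mCode]
  exact Finset.sum_congr rfl fun i _ => rajCode_eq_mCode_of_fireworks hF i

end Aux5
section Aux6

variable {n : ℕ}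

lemma not_mem_descents_of_asc {w : Equiv.Perm (Fin n)} {j : Fin n}
    (h : (j : ℕ) + 1 < n) (ha : w j < w ⟨(j : ℕ) + 1, h⟩) : j ∉ descents w := by
  intro hd
  rcases (mem_descents_iff w j).mp hd with ⟨h', hd'⟩
  have : (⟨(j : ℕ) + 1, h'⟩ : Fin n) = ⟨(j : ℕ) + 1, h⟩ := rfl
  rw [this] at hd'
  exact absurd ha (not_lt.mpr (le_of_lt hd'))

lemma strict_bound {w : Equiv.Perm (Fin n)} {i0 j : Fin n} {h : (j : ℕ) + 1 < n}
    (hij : i0 < j) (ha : w j < w ⟨(j : ℕ) + 1, h⟩) (hb : w ⟨(j : ℕ) + 1, h⟩ < w i0)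
    (s : Finset (Fin n)) (hi : i0 ∈ s) (hge : ∀ k ∈ s, i0 ≤ k)
    (hincr : ∀ k ∈ s, ∀ l ∈ s, k < l → w k < w l) :
    s.card + mCode w i0 + 1 ≤ n - (i0 : ℕ) := by
  have hij' : (i0 : ℕ) < (j : ℕ) := Fin.lt_def.mp hij
  set j1 : Fin n := ⟨(j : ℕ) + 1, h⟩ with hj1
  -- split s at position j
  have hssplit := Finset.card_filter_add_card_filter_not
    (s := s) (p := fun k : Fin n => (k : ℕ) ≤ (j : ℕ))
  set s1 := s.filter (fun k : Fin n => (k : ℕ) ≤ (j : ℕ)) with hs1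
  set s2 := s.filter (fun k : Fin n => ¬ (k : ℕ) ≤ (j : ℕ)) with hs2
  have hi0s1 : i0 ∈ s1 := by
    rw [hs1, Finset.mem_filter]; exact ⟨hi, by omega⟩
  have hG1 := gen_bound w s1.card s1 le_rfl i0 (j : ℕ) hi0s1
    (fun k hk => hge k (Finset.mem_of_mem_filter _ hk))
    (fun k hk l hl hkl => hincr k (Finset.mem_of_mem_filter _ hk) l (Finset.mem_of_mem_filter _ hl) hkl)
    (fun k hk => (Finset.mem_filter.mp hk).2)
  -- decompose mCode
  rw [mCode_eq]
  set Dfull := (descents w).filter fun j' => i0 ≤ j' ∧ (j' : ℕ) < n - 1 with hDfull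
  have hsplit1 := Finset.card_filter_add_card_filter_not
    (s := Dfull) (p := fun j' : Fin n => (j' : ℕ) < (j : ℕ))
  have hpartA : (Dfull.filter fun j' : Fin n => (j' : ℕ) < (j : ℕ)).card
      ≤ ((descents w).filter fun j' => i0 ≤ j' ∧ (j' : ℕ) < (j : ℕ)).card := by
    apply Finset.card_le_card
    intro j' hj'
    simp only [hDfull, Finset.mem_filter] at hj' ⊢
    exact ⟨hj'.1.1, hj'.1.2.1, hj'.2⟩
  rcases s2.eq_empty_or_nonempty with he | hne
  · -- no element of s beyond j
    have hpartB : (Dfull.filter fun j' : Fin n => ¬ (j' : ℕ) < (j : ℕ)).card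
        ≤ n - 1 - (j : ℕ) - 1 := by
      have hsub := Finset.card_le_card_of_injOn (f := fun k : Fin n => (k : ℕ))
        (s := Dfull.filter fun j' : Fin n => ¬ (j' : ℕ) < (j : ℕ))
        (t := (Finset.Ico (j : ℕ) (n - 1)).erase (j : ℕ))
        (by intro j' hj'
            simp only [hDfull, Finset.mem_coe, Finset.mem_filter] at hj'
            obtain ⟨⟨hjd, _, hlt⟩, hgej⟩ := hj'
            simp only [Finset.mem_coe, Finset.mem_erase, Finset.mem_Ico]
            refine ⟨?_, by omega, hlt⟩
            intro hje
            have : j' = j := Fin.ext hje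
            subst this
            exact not_mem_descents_of_asc h ha hjd)
        (by intro x _ y _ hxy; exact Fin.ext hxy)
      have hjm : (j : ℕ) ∈ Finset.Ico (j : ℕ) (n - 1) := by
        simp [Finset.mem_Ico]; omega
      rw [Finset.card_erase_of_mem hjm, Nat.card_Ico] at hsub
      exact hsub
    have hs2 : s2.card = 0 := by rw [he]; simp
    omega
  · set i' := s2.min' hne with hi'def
    have hi's2 : i' ∈ s2 := Finset.min'_mem _ hne
    have hi'mem : i' ∈ s := Finset.mem_of_mem_filter _ hi's2
    have hi'gt : (j : ℕ) < (i' : ℕ) := by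
      have := (Finset.mem_filter.mp hi's2).2; omega
    have hi0i' : i0 < i' := Fin.lt_def.mpr (by omega)
    have hwi0i' : w i0 < w i' := hincr i0 hi i' hi'mem hi0i'
    have hi'ne : (i' : ℕ) ≠ (j : ℕ) + 1 := by
      intro heq
      have : i' = j1 := Fin.ext heq
      rw [this] at hwi0i'
      exact absurd hb (not_lt.mpr (le_of_lt hwi0i'))
    have hi'ge : (j : ℕ) + 2 ≤ (i' : ℕ) := by omega
    have hwj1i' : w j1 < w i' := hb.trans hwi0i'
    obtain ⟨j2, hj2a, hj2b, hj2h, hj2asc⟩ :=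
      exists_ascent w ((i' : ℕ) - ((j : ℕ) + 1)) j1 i' (by simp [hj1]; omega) hwj1i'
    have hj2a' : (j : ℕ) + 1 ≤ (j2 : ℕ) := by simp [hj1] at hj2a; omega
    have hG2 := gen_bound w s2.card s2 le_rfl i' (n - 1) hi's2
      (fun k hk => Finset.min'_le _ k hk)
      (fun k hk l hl hkl => hincr k (Finset.mem_of_mem_filter _ hk) l (Finset.mem_of_mem_filter _ hl) hkl)
      (fun k _ => by have := k.isLt; omega)
    -- split partB at i'
    have hsplit2 := Finset.card_filter_add_card_filter_not
      (s := Dfull.filter fun j' : Fin n => ¬ (j' : ℕ) < (j : ℕ))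
      (p := fun j' : Fin n => (j' : ℕ) < (i' : ℕ))
    have hpartB1 : ((Dfull.filter fun j' : Fin n => ¬ (j' : ℕ) < (j : ℕ)).filter
        fun j' : Fin n => (j' : ℕ) < (i' : ℕ)).card ≤ (i' : ℕ) - (j : ℕ) - 2 := by
      have hsub := Finset.card_le_card_of_injOn (f := fun k : Fin n => (k : ℕ))
        (s := (Dfull.filter fun j' : Fin n => ¬ (j' : ℕ) < (j : ℕ)).filter
          fun j' : Fin n => (j' : ℕ) < (i' : ℕ))
        (t := ((Finset.Ico (j : ℕ) (i' : ℕ)).erase (j : ℕ)).erase (j2 : ℕ))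
        (by intro j' hj'
            simp only [hDfull, Finset.mem_coe, Finset.mem_filter] at hj'
            obtain ⟨⟨⟨hjd, _, _⟩, hgej⟩, hlti'⟩ := hj'
            simp only [Finset.mem_coe, Finset.mem_erase, Finset.mem_Ico]
            refine ⟨?_, ?_, by omega, hlti'⟩
            · intro hje
              have : j' = j2 := Fin.ext hje
              subst this
              exact not_mem_descents_of_asc hj2h hj2asc hjd
            · intro hje
              have : j' = j := Fin.ext hje
              subst this
              exact not_mem_descents_of_asc h ha hjd)
        (by intro x _ y _ hxy; exact Fin.ext hxy)
      have hjm : (j : ℕ) ∈ Finset.Ico (j : ℕ) (i' : ℕ) := by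
        simp [Finset.mem_Ico]; omega
      have hj2m : (j2 : ℕ) ∈ (Finset.Ico (j : ℕ) (i' : ℕ)).erase (j : ℕ) := by
        simp only [Finset.mem_erase, Finset.mem_Ico]
        omega
      rw [Finset.card_erase_of_mem hj2m, Finset.card_erase_of_mem hjm, Nat.card_Ico] at hsub
      exact hsub
    have hpartB2 : ((Dfull.filter fun j' : Fin n => ¬ (j' : ℕ) < (j : ℕ)).filter
        fun j' : Fin n => ¬ (j' : ℕ) < (i' : ℕ)).card
        ≤ ((descents w).filter fun j' => i' ≤ j' ∧ (j' : ℕ) < n - 1).card := by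
      apply Finset.card_le_card
      intro j' hj'
      simp only [hDfull, Finset.mem_filter] at hj' ⊢
      obtain ⟨⟨⟨hjd, _, hlt⟩, _⟩, hgei'⟩ := hj'
      exact ⟨hjd, Fin.le_def.mpr (by omega), hlt⟩
    have hi'lt : (i' : ℕ) < n := i'.isLt
    omega

lemma rajCode_gt_at_witness {w : Equiv.Perm (Fin n)} {i0 j : Fin n} {h : (j : ℕ) + 1 < n}
    (hij : i0 < j) (ha : w j < w ⟨(j : ℕ) + 1, h⟩) (hb : w ⟨(j : ℕ) + 1, h⟩ < w i0) :
    mCode w i0 < rajCode w i0 := by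
  have hlis : lisFrom w i0 + mCode w i0 + 1 ≤ n - (i0 : ℕ) := by
    have hM := mCode_le w i0
    have hn : (i0 : ℕ) < n := i0.isLt
    have hij' : (i0 : ℕ) < (j : ℕ) := Fin.lt_def.mp hij
    have hjn : (j : ℕ) + 1 < n := h
    have hsup : lisFrom w i0 ≤ n - (i0 : ℕ) - mCode w i0 - 1 := by
      unfold lisFrom
      apply Finset.sup_le
      intro s hs
      simp only [Finset.mem_filter, Finset.mem_univ, true_and] at hs
      have := strict_bound hij ha hb s hs.1 hs.2.1 hs.2.2
      omega
    omega
  unfold rajCode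
  omega

end Aux6
/-- `raj(w) = maj(w)` iff `w` is a fireworks permutation. -/
theorem raj_eq_maj_iff_fireworks (n : ℕ) (w : Equiv.Perm (Fin n)) :
    raj w = maj w ↔ Fireworks w := by
  constructor
  · intro hraj
    by_contra hNF
    obtain ⟨i0, j, h, hij, ha, hb⟩ := not_not.mp hNF
    have hlt : maj w < raj w := by
      rw [raj, maj_eq_sum_mCode]
      exact Finset.sum_lt_sum (fun i _ => mCode_le_rajCode w i)
        ⟨i0, Finset.mem_univ _, rajCode_gt_at_witness hij ha hb⟩
    omega
  · exact raj_eq_maj_of_fireworks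

end RajRegularity
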